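/- Let μ, μ̂ ∈ ℝ^n be positive vectors, and let σ, τ be permutations of {1,…,n} such that the sequences (μ_{σ(1)},…,μ_{σ(n)}) and (μ̂_{τ(1)},…,μ̂_{τ(n)}) are both non-decreasing. Then minᵢ (μᵢ/μ̂ᵢ) ≤ minᵢ (μ_{σ(i)}/μ̂_{τ(i)}) and maxᵢ (μ_{σ(i)}/μ̂_{τ(i)}) ≤ maxᵢ (μᵢ/μ̂ᵢ); that is, the interval [minᵢ μ_{σ(i)}/μ̂_{τ(i)}, maxᵢ μ_{σ(i)}/μ̂_{τ(i)}] is contained in the interval [minᵢ μᵢ/μ̂ᵢ, maxᵢ μᵢ/μ̂ᵢ]. -/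
import Mathlib


open Matrix BigOperators

lemma stmt14_key {n : ℕ} (f g : Fin n → ℝ) (σ τ : Equiv.Perm (Fin n))
    (hσ : Monotone fun i => f (σ i)) (hτ : Monotone fun i => g (τ i))
    (i : Fin n) : ∃ j, f j ≤ f (σ i) ∧ g (τ i) ≤ g j := by
  classical
  set A := Finset.univ.filter (fun j => f j ≤ f (σ i)) with hAdef
  set B := Finset.univ.filter (fun j => g (τ i) ≤ g j) with hBdef
  have hA : (Finset.Iic i).image σ ⊆ A := by
    intro j hj
    simp only [Finset.mem_image, Finset.mem_Iic] at hj
    obtain ⟨k, hk, rfl⟩ := hj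
    simp only [hAdef, Finset.mem_filter, Finset.mem_univ, true_and]
    exact hσ hk
  have hB : (Finset.Ici i).image τ ⊆ B := by
    intro j hj
    simp only [Finset.mem_image, Finset.mem_Ici] at hj
    obtain ⟨k, hk, rfl⟩ := hj
    simp only [hBdef, Finset.mem_filter, Finset.mem_univ, true_and]
    exact hτ hk
  have hcA : (i : ℕ) + 1 ≤ A.card := by
    have := Finset.card_le_card hA
    rwa [Finset.card_image_of_injective _ σ.injective, Fin.card_Iic] at this
  have hcB : n - (i : ℕ) ≤ B.card := by
    have := Finset.card_le_card hB
    rwa [Finset.card_image_of_injective _ τ.injective, Fin.card_Ici] at this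
  have hunion : (A ∪ B).card ≤ n := by
    simpa using Finset.card_le_univ (A ∪ B)
  have hsum : n + 1 ≤ A.card + B.card := by
    have hi : (i : ℕ) < n := i.isLt
    omega
  have hinter : 0 < (A ∩ B).card := by
    have := Finset.card_inter_add_card_union A B
    omega
  obtain ⟨j, hj⟩ := Finset.card_pos.mp hinter
  rw [Finset.mem_inter, hAdef, hBdef, Finset.mem_filter, Finset.mem_filter] at hj
  exact ⟨j, hj.1.2, hj.2.2⟩

/-- If `σ, τ` are permutations sorting `μ` and `μ̂` into
non-decreasing order, then
`[minᵢ μ_{σ(i)}/μ̂_{τ(i)}, maxᵢ μ_{σ(i)}/μ̂_{τ(i)}] ⊆ [minᵢ μᵢ/μ̂ᵢ, maxᵢ μᵢ/μ̂ᵢ]`. -/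
theorem stmt14 {n : ℕ} (μ μh : Fin n → ℝ)
    (hμpos : ∀ i, 0 < μ i) (hμhpos : ∀ i, 0 < μh i)
    (σ τ : Equiv.Perm (Fin n))
    (hσ : Monotone fun i => μ (σ i))
    (hτ : Monotone fun i => μh (τ i)) :
    ((⨅ i, μ i / μh i) ≤ ⨅ i, μ (σ i) / μh (τ i)) ∧
    ((⨆ i, μ (σ i) / μh (τ i)) ≤ ⨆ i, μ i / μh i) ∧
    Set.Icc (⨅ i, μ (σ i) / μh (τ i)) (⨆ i, μ (σ i) / μh (τ i)) ⊆
      Set.Icc (⨅ i, μ i / μh i) (⨆ i, μ i / μh i) := by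
  rcases Nat.eq_zero_or_pos n with rfl | hn
  · haveI : IsEmpty (Fin 0) := inferInstance
    simp [Real.iInf_of_isEmpty, Real.iSup_of_isEmpty]
  · haveI : Nonempty (Fin n) := ⟨⟨0, hn⟩⟩
    have h1 : (⨅ i, μ i / μh i) ≤ ⨅ i, μ (σ i) / μh (τ i) := by
      apply le_ciInf
      intro i
      obtain ⟨j, hj1, hj2⟩ := stmt14_key μ μh σ τ hσ hτ i
      calc (⨅ k, μ k / μh k) ≤ μ j / μh j := ciInf_le (Finite.bddBelow_range _) j
        _ ≤ μ (σ i) / μh (τ i) := div_le_div₀ (le_of_lt (hμpos _)) hj1 (hμhpos _) hj2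
    have h2 : (⨆ i, μ (σ i) / μh (τ i)) ≤ ⨆ i, μ i / μh i := by
      apply ciSup_le
      intro i
      have hσ' : Monotone fun k => (fun j => -μ j) ((Fin.revPerm.trans σ).symm.symm k) := by
        intro a b hab
        simp only [Equiv.symm_symm, Equiv.trans_apply, Fin.revPerm_apply]
        exact neg_le_neg (hσ (Fin.rev_le_rev.mpr hab))
      have hτ' : Monotone fun k => (fun j => -μh j) ((Fin.revPerm.trans τ).symm.symm k) := by
        intro a b hab
        simp only [Equiv.symm_symm, Equiv.trans_apply, Fin.revPerm_apply]
        exact neg_le_neg (hτ (Fin.rev_le_rev.mpr hab))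
      obtain ⟨j, hj1, hj2⟩ := stmt14_key (fun j => -μ j) (fun j => -μh j)
        ((Fin.revPerm.trans σ).symm.symm) ((Fin.revPerm.trans τ).symm.symm) hσ' hτ' i.rev
      simp only [Equiv.symm_symm, Equiv.trans_apply, Fin.revPerm_apply, Fin.rev_rev,
        neg_le_neg_iff] at hj1 hj2
      calc μ (σ i) / μh (τ i) ≤ μ j / μh j :=
            div_le_div₀ (le_of_lt (hμpos _)) hj1 (hμhpos _) hj2
        _ ≤ ⨆ k, μ k / μh k := le_ciSup (Finite.bddAbove_range fun k => μ k / μh k) j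
    exact ⟨h1, h2, Set.Icc_subset_Icc h1 h2⟩
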